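/- Let θ : ℝ → ℝ be twice differentiable with θ' > 0, and let f¹, f² : ℝ³ → ℝ be differentiable with ∂₁f¹ + ∂₂f² = 0 and ∂₂f¹ − ∂₁f² = 0 (anti-CR in z₁,z₂, with z₃ a parameter). Define the 3×5 matrix A(t) with rows: row1 = (cos θ, −sin θ, 0, cos θ, sin θ)/√(θ'), row2 = (sin θ, cos θ, 0, −sin θ, cos θ)/√(θ'), row3 = (0,0,θ',0,0), and v = (z₁,z₂,z₃,f¹,f²). Then for φ = Av, det(dφ) = 1 − (∂₁f¹)² − (∂₂f¹)², which is independent of t. -/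

import Mathlib

/-- Partial derivatives of f : ℝ³ → ℝ (ℝ³ as ℝ × ℝ × ℝ). -/
noncomputable def qd1 (f : ℝ × ℝ × ℝ → ℝ) (z : ℝ × ℝ × ℝ) : ℝ :=
  fderiv ℝ f z ((1:ℝ), (0:ℝ), (0:ℝ))
noncomputable def qd2 (f : ℝ × ℝ × ℝ → ℝ) (z : ℝ × ℝ × ℝ) : ℝ :=
  fderiv ℝ f z ((0:ℝ), (1:ℝ), (0:ℝ))
noncomputable def qd3 (f : ℝ × ℝ × ℝ → ℝ) (z : ℝ × ℝ × ℝ) : ℝ :=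
  fderiv ℝ f z ((0:ℝ), (0:ℝ), (1:ℝ))

lemma fderiv_comb (f1 f2 : ℝ × ℝ × ℝ → ℝ) (hf1 : Differentiable ℝ f1)
    (hf2 : Differentiable ℝ f2) (c1 c2 c3 c4 S : ℝ) (z v : ℝ × ℝ × ℝ) :
    fderiv ℝ (fun z : ℝ × ℝ × ℝ =>
        (c1 * z.1 + c2 * z.2.1 + c3 * f1 z + c4 * f2 z) / S) z v
      = (c1 * v.1 + c2 * v.2.1 + c3 * (fderiv ℝ f1 z v) + c4 * (fderiv ℝ f2 z v)) / S := by
  have h1 : HasFDerivAt (fun z : ℝ × ℝ × ℝ => z.1)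
      (ContinuousLinearMap.fst ℝ ℝ (ℝ × ℝ)) z := hasFDerivAt_fst
  have h2 : HasFDerivAt (fun z : ℝ × ℝ × ℝ => z.2.1)
      ((ContinuousLinearMap.fst ℝ ℝ ℝ).comp (ContinuousLinearMap.snd ℝ ℝ (ℝ × ℝ))) z :=
    hasFDerivAt_fst.comp z hasFDerivAt_snd
  have H := ((((h1.const_mul c1).add (h2.const_mul c2)).add
      (((hf1 z).hasFDerivAt).const_mul c3)).add
      (((hf2 z).hasFDerivAt).const_mul c4)).const_mul S⁻¹
  simp only [div_eq_inv_mul]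
  rw [show fderiv ℝ (fun z : ℝ × ℝ × ℝ => S⁻¹ * (c1 * z.1 + c2 * z.2.1 + c3 * f1 z + c4 * f2 z)) z = _ from H.fderiv]
  simp [ContinuousLinearMap.comp_apply]
  ring

lemma fderiv_third (k : ℝ) (z v : ℝ × ℝ × ℝ) :
    fderiv ℝ (fun z : ℝ × ℝ × ℝ => k * z.2.2) z v = k * v.2.2 := by
  have h2 : HasFDerivAt (fun z : ℝ × ℝ × ℝ => z.2.2)
      ((ContinuousLinearMap.snd ℝ ℝ ℝ).comp (ContinuousLinearMap.snd ℝ ℝ (ℝ × ℝ))) z :=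
    hasFDerivAt_snd.comp z hasFDerivAt_snd
  rw [(h2.const_mul k).fderiv]
  simp [ContinuousLinearMap.comp_apply]

/-- For the 3×5 solution family with θ' > 0 and f¹, f² an anti-CR pair in (z₁,z₂),
φ = Av has det(dφ) = 1 − (∂₁f¹)² − (∂₂f¹)², independent of t. -/
theorem det_3x5_solution
    (θ : ℝ → ℝ) (hθ : Differentiable ℝ θ) (hθ' : ∀ t, 0 < deriv θ t)
    (f1 f2 : ℝ × ℝ × ℝ → ℝ) (hf1 : Differentiable ℝ f1) (hf2 : Differentiable ℝ f2)
    (hCR1 : ∀ z, qd1 f1 z + qd2 f2 z = 0)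
    (hCR2 : ∀ z, qd2 f1 z - qd1 f2 z = 0)
    (φ1 φ2 φ3 : ℝ × ℝ × ℝ → ℝ → ℝ)
    (hφ1 : ∀ z t, φ1 z t = (Real.cos (θ t) * z.1 - Real.sin (θ t) * z.2.1
        + Real.cos (θ t) * f1 z + Real.sin (θ t) * f2 z) / Real.sqrt (deriv θ t))
    (hφ2 : ∀ z t, φ2 z t = (Real.sin (θ t) * z.1 + Real.cos (θ t) * z.2.1
        - Real.sin (θ t) * f1 z + Real.cos (θ t) * f2 z) / Real.sqrt (deriv θ t))
    (hφ3 : ∀ z t, φ3 z t = deriv θ t * z.2.2) :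
    ∀ t z,
      Matrix.det !![qd1 (fun z => φ1 z t) z, qd2 (fun z => φ1 z t) z, qd3 (fun z => φ1 z t) z;
                    qd1 (fun z => φ2 z t) z, qd2 (fun z => φ2 z t) z, qd3 (fun z => φ2 z t) z;
                    qd1 (fun z => φ3 z t) z, qd2 (fun z => φ3 z t) z, qd3 (fun z => φ3 z t) z]
        = 1 - (qd1 f1 z) ^ 2 - (qd2 f1 z) ^ 2 := by
  intro t z
  set c := Real.cos (θ t) with hc
  set s := Real.sin (θ t) with hs
  set S := Real.sqrt (deriv θ t) with hS
  have hd : (0:ℝ) < deriv θ t := hθ' t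
  have hS2 : S * S = deriv θ t := Real.mul_self_sqrt hd.le
  have hSne : S ≠ 0 := by positivity
  have eφ1 : (fun z => φ1 z t) = fun z : ℝ × ℝ × ℝ =>
      (c * z.1 + (-s) * z.2.1 + c * f1 z + s * f2 z) / S := by
    funext z; rw [hφ1]; ring
  have eφ2 : (fun z => φ2 z t) = fun z : ℝ × ℝ × ℝ =>
      (s * z.1 + c * z.2.1 + (-s) * f1 z + c * f2 z) / S := by
    funext z; rw [hφ2]; ring
  have eφ3 : (fun z => φ3 z t) = fun z : ℝ × ℝ × ℝ => deriv θ t * z.2.2 := by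
    funext z; rw [hφ3]
  set a := qd1 f1 z with ha
  set b := qd2 f1 z with hb
  have hb2 : qd1 f2 z = b := by have := hCR2 z; rw [← ha] at *; linarith [hCR2 z]
  have ha2 : qd2 f2 z = -a := by linarith [hCR1 z]
  have q31 : qd3 f1 z = qd3 f1 z := rfl
  simp only [qd1, qd2, qd3, eφ1, eφ2, eφ3,
    fderiv_comb f1 f2 hf1 hf2, fderiv_third]
  rw [Matrix.det_fin_three]
  simp only [Matrix.of_apply, Matrix.cons_val', Matrix.cons_val_zero, Matrix.cons_val_one,
    Matrix.cons_val_two, Matrix.empty_val', Matrix.cons_val_fin_one, Matrix.head_cons, Matrix.tail_cons,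
    Matrix.head_fin_const]
  have e1 : fderiv ℝ f1 z ((1:ℝ), (0:ℝ), (0:ℝ)) = a := rfl
  have e2 : fderiv ℝ f1 z ((0:ℝ), (1:ℝ), (0:ℝ)) = b := rfl
  have e3 : fderiv ℝ f2 z ((1:ℝ), (0:ℝ), (0:ℝ)) = b := hb2
  have e4 : fderiv ℝ f2 z ((0:ℝ), (1:ℝ), (0:ℝ)) = -a := ha2
  rw [e1, e2, e3, e4]
  have hcs : c ^ 2 + s ^ 2 = 1 := by rw [hc, hs]; exact Real.cos_sq_add_sin_sq (θ t)
  have hdne : deriv θ t ≠ 0 := ne_of_gt hd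
  field_simp
  rw [← hS2]
  linear_combination (S^2 * (1 - a^2 - b^2)) * hcs
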